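/- Let q be a real number with |q| < 1. Then there exists a constant C > 0 (depending only on q) such that for every n ≥ 0 and every real x with x² ≤ 4/(1−q), |H_n(x|q)| ≤ C·(n+1)·(1−q)^{−n/2}. -/

import Mathlib

open MeasureTheory Finset

noncomputable section

/-- The `q`-integer `[n]_q = 1 + q + ⋯ + q^{n-1}`. -/
def qInt (q : ℝ) (n : ℕ) : ℝ := ∑ i ∈ Finset.range n, q ^ i

/-- The (renormalized) continuous `q`-Hermite polynomials, as functions:
`H_{-1} = 0`, `H_0 = 1`, `H_{n+1}(x) = x H_n(x) - [n]_q H_{n-1}(x)`. -/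
def qHermite (q : ℝ) : ℕ → ℝ → ℝ
  | 0 => fun _ => 1
  | 1 => fun x => x
  | n + 2 => fun x => x * qHermite q (n + 1) x - qInt q (n + 1) * qHermite q n x

/-- Normalized recurrence: `p_0 = 1`, `p_1 = 2c`, `p_{n+2} = 2c p_{n+1} - (1-q^{n+1}) p_n`. -/
def pSeq (q c : ℝ) : ℕ → ℝ
  | 0 => 1
  | 1 => 2 * c
  | n + 2 => 2 * c * pSeq q c (n + 1) - (1 - q ^ (n + 1)) * pSeq q c n

lemma qInt_mul (q : ℝ) (n : ℕ) : qInt q n * (1 - q) = 1 - q ^ n := by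
  have h := geom_sum_mul q n
  unfold qInt
  linear_combination (-1 : ℝ) * h

lemma pSeq_le (q c : ℝ) (hq : |q| < 1) (hc : |c| ≤ 1) :
    ∀ n : ℕ, |pSeq q c n| ≤ 3 ^ n := by
  have key : ∀ n : ℕ, |pSeq q c n| ≤ 3 ^ n ∧ |pSeq q c (n + 1)| ≤ 3 ^ (n + 1) := by
    intro n
    induction n with
    | zero =>
      constructor
      · simp [pSeq]
      · simp only [pSeq]
        rw [abs_mul]
        calc |(2:ℝ)| * |c| ≤ 2 * 1 := by
              apply mul_le_mul _ hc (abs_nonneg _) (by norm_num)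
              simp [abs_of_nonneg]
          _ ≤ 3 ^ (0 + 1) := by norm_num
    | succ n ih =>
      refine ⟨ih.2, ?_⟩
      show |2 * c * pSeq q c (n + 1) - (1 - q ^ (n + 1)) * pSeq q c n| ≤ _
      have h1 : |2 * c * pSeq q c (n + 1)| ≤ 2 * 3 ^ (n + 1) := by
        rw [abs_mul, abs_mul]
        have : |(2:ℝ)| * |c| ≤ 2 := by
          rw [abs_of_nonneg (by norm_num : (0:ℝ) ≤ 2)]
          nlinarith [abs_nonneg c]
        calc |(2:ℝ)| * |c| * |pSeq q c (n + 1)| ≤ 2 * |pSeq q c (n + 1)| :=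
              mul_le_mul_of_nonneg_right this (abs_nonneg _)
          _ ≤ 2 * 3 ^ (n + 1) := by
              have := ih.2; nlinarith
      have h2 : |(1 - q ^ (n + 1)) * pSeq q c n| ≤ 2 * 3 ^ n := by
        rw [abs_mul]
        have hqp : |q ^ (n + 1)| ≤ 1 := by
          rw [abs_pow]
          exact pow_le_one₀ (abs_nonneg _) hq.le
        have : |1 - q ^ (n + 1)| ≤ 2 := by
          have := abs_sub_abs_le_abs_sub (1 : ℝ) (q ^ (n + 1))
          have h3 := abs_sub (1 : ℝ) (q ^ (n + 1))
          calc |1 - q ^ (n + 1)| ≤ |(1:ℝ)| + |q ^ (n + 1)| := abs_sub _ _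
            _ ≤ 2 := by rw [abs_one]; linarith
        have hp := ih.1
        calc |1 - q ^ (n + 1)| * |pSeq q c n| ≤ 2 * |pSeq q c n| :=
              mul_le_mul_of_nonneg_right this (abs_nonneg _)
          _ ≤ 2 * 3 ^ n := by nlinarith
      calc |2 * c * pSeq q c (n + 1) - (1 - q ^ (n + 1)) * pSeq q c n|
          ≤ |2 * c * pSeq q c (n + 1)| + |(1 - q ^ (n + 1)) * pSeq q c n| := abs_sub _ _
        _ ≤ 2 * 3 ^ (n + 1) + 2 * 3 ^ n := by linarith
        _ ≤ 3 ^ (n + 2) := by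
            have h3 : (0:ℝ) ≤ 3 ^ n := by positivity
            have e1 : (3:ℝ) ^ (n + 1) = 3 * 3 ^ n := by ring
            have e2 : (3:ℝ) ^ (n + 2) = 9 * 3 ^ n := by ring
            rw [e1, e2]; linarith
  exact fun n => (key n).1

lemma qHermite_eq_pSeq (q c s : ℝ) (hs : s ^ 2 * (1 - q) = 1) :
    ∀ n : ℕ, qHermite q n (2 * c * s) = s ^ n * pSeq q c n := by
  have hqi : ∀ m : ℕ, qInt q m = (1 - q ^ m) * s ^ 2 := by
    intro m
    have h := qInt_mul q m
    linear_combination s ^ 2 * h - qInt q m * hs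
  have key : ∀ n : ℕ, qHermite q n (2 * c * s) = s ^ n * pSeq q c n ∧
      qHermite q (n + 1) (2 * c * s) = s ^ (n + 1) * pSeq q c (n + 1) := by
    intro n
    induction n with
    | zero =>
      constructor
      · simp [qHermite, pSeq]
      · simp only [qHermite, pSeq]; ring
    | succ n ih =>
      refine ⟨ih.2, ?_⟩
      show (2 * c * s) * qHermite q (n + 1) (2 * c * s)
          - qInt q (n + 1) * qHermite q n (2 * c * s) = _
      rw [ih.1, ih.2, hqi (n + 1)]
      show _ = s ^ (n + 2) * (2 * c * pSeq q c (n + 1) - (1 - q ^ (n + 1)) * pSeq q c n)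
      ring
  exact fun n => (key n).1

lemma pSeq_bound (q : ℝ) (hq : |q| < 1) :
    ∃ C : ℝ, 0 < C ∧ ∀ c : ℝ, |c| ≤ 1 → ∀ n : ℕ, |pSeq q c n| ≤ C * (n + 1) := by
  set r : ℝ := |q| with hr
  have hr0 : 0 ≤ r := abs_nonneg q
  set g : ℕ → ℝ := fun k => (k + 1 : ℝ) * r ^ (k + 1) with hg
  have hgnn : ∀ k, 0 ≤ g k := fun k => by positivity
  have hgsum : Summable g := by
    have h1 : Summable (fun n : ℕ => (n : ℝ) ^ 1 * r ^ n) :=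
      summable_pow_mul_geometric_of_norm_lt_one 1
        (by rw [Real.norm_eq_abs, abs_of_nonneg hr0]; exact hq)
    have h2 : Summable (fun n : ℕ => (n : ℝ) * r ^ n) := by simpa using h1
    have := (summable_nat_add_iff (f := fun n : ℕ => (n : ℝ) * r ^ n) 1).2 h2
    simpa [hg] using this
  -- choose N with tail ≤ 1/2
  have htail : Filter.Tendsto (fun i => ∑' k, g (k + i)) Filter.atTop (nhds 0) :=
    tendsto_sum_nat_add g
  obtain ⟨N, hN⟩ := (htail.eventually (eventually_le_nhds (by norm_num : (0:ℝ) < 1/2))).exists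
  -- hN : ∑' k, g (k + N) ≤ 1/2
  set B : ℝ := 2 * 3 ^ (N + 1) with hB
  set C : ℝ := 2 * B with hC
  have hBpos : 0 < B := by positivity
  have hCpos : 0 < C := by positivity
  have hBC : B + C / 2 ≤ C := by rw [hC]; linarith
  have hsum_tail : ∀ n : ℕ, N ≤ n → ∑ k ∈ Finset.Ico N n, g k ≤ 1 / 2 := by
    intro n hn
    rw [Finset.sum_Ico_eq_sum_range]
    have hsm : Summable fun k => g (N + k) := by
      have := (summable_nat_add_iff (f := g) N).2 hgsum
      simpa [add_comm] using this
    have h1 : ∑ k ∈ Finset.range (n - N), g (N + k) ≤ ∑' k, g (N + k) :=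
      Summable.sum_le_tsum _ (fun i _ => hgnn _) hsm
    have h2 : ∑' k, g (N + k) = ∑' k, g (k + N) := tsum_congr fun k => by rw [add_comm]
    linarith
  refine ⟨C, hCpos, ?_⟩
  intro c hc n
  -- set up the complex unit z = c + i √(1-c²)
  have hc2 : c ^ 2 ≤ 1 := (sq_le_one_iff_abs_le_one c).2 hc
  set t : ℝ := Real.sqrt (1 - c ^ 2) with ht
  have ht2 : t ^ 2 = 1 - c ^ 2 := Real.sq_sqrt (by linarith)
  obtain ⟨z, hz1, hz2, hznorm⟩ :
      ∃ z : ℂ, z + (starRingEnd ℂ) z = 2 * (c : ℂ) ∧ z * (starRingEnd ℂ) z = 1 ∧ ‖z‖ = 1 := by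
    have hns : Complex.normSq ((c : ℂ) + (t : ℂ) * Complex.I) = 1 := by
      simp [Complex.normSq_apply]
      nlinarith [ht2]
    refine ⟨(c : ℂ) + (t : ℂ) * Complex.I, ?_, ?_, ?_⟩
    · simp [Complex.ext_iff]
      ring
    · rw [Complex.mul_conj, hns]; norm_num
    · have h := Complex.sq_norm ((c : ℂ) + (t : ℂ) * Complex.I)
      rw [hns] at h
      nlinarith [norm_nonneg ((c : ℂ) + (t : ℂ) * Complex.I)]
  set f : ℕ → ℂ := fun m => (pSeq q c (m + 1) : ℂ) - z * (pSeq q c m : ℂ) with hf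
  have hrec : ∀ m : ℕ, f (m + 1) = (starRingEnd ℂ) z * f m + ((q ^ (m + 1) * pSeq q c m : ℝ) : ℂ) := by
    intro m
    have hps : (pSeq q c (m + 2) : ℂ) =
        2 * c * (pSeq q c (m + 1) : ℂ) - (1 - (q : ℂ) ^ (m + 1)) * (pSeq q c m : ℂ) := by
      push_cast [pSeq]
      ring
    simp only [hf]
    rw [hps]
    push_cast
    linear_combination (pSeq q c m : ℂ) * hz2 - (pSeq q c (m + 1) : ℂ) * hz1
  have hfB : ∀ m : ℕ, ‖f m‖ ≤ 2 * 3 ^ (m + 1) := by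
    intro m
    have h1 := pSeq_le q c hq hc (m + 1)
    have h2 := pSeq_le q c hq hc m
    have e1 : (3:ℝ) ^ (m + 1) = 3 * 3 ^ m := by ring
    have h3 : (0:ℝ) ≤ 3 ^ m := by positivity
    calc ‖f m‖ ≤ ‖(pSeq q c (m + 1) : ℂ)‖ + ‖z * (pSeq q c m : ℂ)‖ := norm_sub_le _ _
      _ = |pSeq q c (m + 1)| + ‖z‖ * |pSeq q c m| := by
          rw [norm_mul]
          simp [Complex.norm_real, Real.norm_eq_abs]
      _ ≤ 3 ^ (m + 1) + 1 * 3 ^ m := by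
          rw [hznorm]
          gcongr <;> simp [h1, h2]
      _ ≤ 2 * 3 ^ (m + 1) := by rw [e1]; linarith
  -- main induction
  have main : ∀ n : ℕ, |pSeq q c n| ≤ C * (n + 1) ∧
      (N ≤ n → ‖f n‖ ≤ B + C * ∑ k ∈ Finset.Ico N n, g k) := by
    intro n
    induction n with
    | zero =>
      constructor
      · have : |pSeq q c 0| = 1 := by simp [pSeq]
        rw [this]
        push_cast
        have : (1:ℝ) ≤ C := by
          have : (2:ℝ) ≤ 3 ^ (N + 1) := by
            calc (2:ℝ) ≤ 3 ^ 1 := by norm_num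
              _ ≤ 3 ^ (N + 1) := by
                apply pow_le_pow_right₀ (by norm_num) (by omega)
          rw [hC, hB]; linarith
        linarith
      · intro hN0
        have hN0' : N = 0 := Nat.le_zero.mp hN0
        have := hfB 0
        rw [hN0']
        simp only [Finset.Ico_self, Finset.sum_empty, mul_zero, add_zero]
        calc ‖f 0‖ ≤ 2 * 3 ^ (0 + 1) := hfB 0
          _ ≤ B := by
              rw [hB]
              have h31 : (3:ℝ) ^ (0 + 1) ≤ 3 ^ (N + 1) :=
                pow_le_pow_right₀ (by norm_num) (by omega)
              linarith
    | succ n ih =>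
      have hCn : |pSeq q c n| ≤ C * (n + 1) := ih.1
      constructor
      · -- bound on |p (n+1)|
        rcases le_or_gt N n with hNn | hNn
        · -- use f
          have hfn := ih.2 hNn
          have htl := hsum_tail n hNn
          have hpstep : |pSeq q c (n + 1)| ≤ ‖f n‖ + |pSeq q c n| := by
            have hid : (pSeq q c (n + 1) : ℂ) = f n + z * (pSeq q c n : ℂ) := by
              simp only [hf]; ring
            calc |pSeq q c (n + 1)| = ‖(pSeq q c (n + 1) : ℂ)‖ := by
                  rw [Complex.norm_real, Real.norm_eq_abs]
              _ ≤ ‖f n‖ + ‖z * (pSeq q c n : ℂ)‖ := by rw [hid]; exact norm_add_le _ _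
              _ = ‖f n‖ + |pSeq q c n| := by
                  rw [norm_mul, hznorm, one_mul, Complex.norm_real, Real.norm_eq_abs]
          have hsumnn : 0 ≤ ∑ k ∈ Finset.Ico N n, g k :=
            Finset.sum_nonneg fun k _ => hgnn k
          have : ‖f n‖ ≤ B + C / 2 := by
            calc ‖f n‖ ≤ B + C * ∑ k ∈ Finset.Ico N n, g k := hfn
              _ ≤ B + C * (1 / 2) := by
                  gcongr
              _ = B + C / 2 := by ring
          push_cast
          calc |pSeq q c (n + 1)| ≤ ‖f n‖ + |pSeq q c n| := hpstep
            _ ≤ (B + C / 2) + C * (n + 1) := by push_cast at hCn; linarith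
            _ ≤ C + C * (n + 1) := by linarith
            _ = C * (n + 1 + 1) := by ring
        · -- crude bound
          have h1 : n + 1 ≤ N := hNn
          have h2 := pSeq_le q c hq hc (n + 1)
          have h3 : (3:ℝ) ^ (n + 1) ≤ 3 ^ (N + 1) := by
            apply pow_le_pow_right₀ (by norm_num) (by omega)
          have h4 : (3:ℝ) ^ (N + 1) ≤ B := by rw [hB]; nlinarith [pow_pos (by norm_num : (0:ℝ) < 3) (N+1)]
          have h5 : B ≤ C := by rw [hC]; linarith
          have h6 : C ≤ C * (n + 1 + 1) := by nlinarith [hCpos]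
          push_cast
          linarith
      · -- bound on ‖f (n+1)‖
        intro hNn1
        rcases eq_or_lt_of_le hNn1 with hEq | hLt
        · -- N = n + 1
          rw [← hEq]
          simp only [Finset.Ico_self, Finset.sum_empty, mul_zero, add_zero]
          calc ‖f N‖ ≤ 2 * 3 ^ (N + 1) := hfB N
            _ = B := hB.symm
        · -- N ≤ n
          have hNn : N ≤ n := Nat.lt_succ_iff.mp hLt
          have hfn := ih.2 hNn
          have hstep : ‖f (n + 1)‖ ≤ ‖f n‖ + |q ^ (n + 1) * pSeq q c n| := by
            rw [hrec n]
            calc ‖(starRingEnd ℂ) z * f n + ((q ^ (n + 1) * pSeq q c n : ℝ) : ℂ)‖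
                ≤ ‖(starRingEnd ℂ) z * f n‖ + ‖((q ^ (n + 1) * pSeq q c n : ℝ) : ℂ)‖ :=
                  norm_add_le _ _
              _ = ‖f n‖ + |q ^ (n + 1) * pSeq q c n| := by
                  rw [norm_mul, RCLike.norm_conj, hznorm, one_mul, Complex.norm_real,
                    Real.norm_eq_abs]
          have hterm : |q ^ (n + 1) * pSeq q c n| ≤ C * g n := by
            rw [abs_mul, abs_pow]
            have : |q| ^ (n + 1) * |pSeq q c n| ≤ r ^ (n + 1) * (C * (n + 1)) := by
              apply mul_le_mul_of_nonneg_left _ (by positivity)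
              push_cast at hCn ⊢
              exact hCn
            calc |q| ^ (n + 1) * |pSeq q c n| ≤ r ^ (n + 1) * (C * (n + 1)) := this
              _ = C * g n := by rw [hg]; push_cast; ring
          rw [Finset.sum_Ico_succ_top hNn]
          calc ‖f (n + 1)‖ ≤ ‖f n‖ + |q ^ (n + 1) * pSeq q c n| := hstep
            _ ≤ (B + C * ∑ k ∈ Finset.Ico N n, g k) + C * g n := by linarith
            _ = B + C * (∑ k ∈ Finset.Ico N n, g k + g n) := by ring
  exact (main n).1

theorem qHermite_bound (q : ℝ) (hq : |q| < 1) :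
    ∃ C : ℝ, 0 < C ∧ ∀ (n : ℕ) (x : ℝ), x ^ 2 ≤ 4 / (1 - q) →
      |qHermite q n x| ≤ C * (n + 1) * (1 - q) ^ (-(n : ℝ) / 2) := by
  have hq1 : q < 1 := lt_of_abs_lt hq
  have h1q : (0:ℝ) < 1 - q := by linarith
  obtain ⟨C, hC, hbound⟩ := pSeq_bound q hq
  refine ⟨C, hC, ?_⟩
  intro n x hx
  set s : ℝ := (1 - q) ^ (-(1:ℝ) / 2) with hs
  have hspos : 0 < s := Real.rpow_pos_of_pos h1q _
  have hs2 : s ^ 2 = 1 / (1 - q) := by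
    rw [hs, ← Real.rpow_natCast ((1 - q) ^ (-(1:ℝ)/2)) 2, ← Real.rpow_mul h1q.le]
    have he : (-(1:ℝ)/2) * ((2:ℕ):ℝ) = -1 := by norm_num
    rw [he, Real.rpow_neg_one, inv_eq_one_div]
  have hs2' : s ^ 2 * (1 - q) = 1 := by
    rw [hs2]; field_simp
  -- c := x / (2 s)
  set c : ℝ := x / (2 * s) with hc
  have hcs : 2 * c * s = x := by
    rw [hc]; field_simp
  have hcabs : |c| ≤ 1 := by
    rw [← sq_le_one_iff_abs_le_one]
    rw [hc, div_pow]
    rw [div_le_one (by positivity)]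
    have : (2 * s) ^ 2 = 4 * (1 / (1 - q)) := by rw [mul_pow, hs2]; ring
    rw [this]
    calc x ^ 2 ≤ 4 / (1 - q) := hx
      _ = 4 * (1 / (1 - q)) := by ring
  have heq := qHermite_eq_pSeq q c s hs2' n
  rw [hcs] at heq
  rw [heq, abs_mul, abs_of_pos (pow_pos hspos n)]
  have hsn : s ^ n = (1 - q) ^ (-(n : ℝ) / 2) := by
    rw [hs, ← Real.rpow_natCast ((1 - q) ^ (-(1:ℝ)/2)) n, ← Real.rpow_mul h1q.le]
    congr 1
    push_cast
    ring
  rw [hsn]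
  calc (1 - q) ^ (-(n : ℝ) / 2) * |pSeq q c n|
      ≤ (1 - q) ^ (-(n : ℝ) / 2) * (C * (n + 1)) := by
        apply mul_le_mul_of_nonneg_left (hbound c hcabs n)
        positivity
    _ = C * (n + 1) * (1 - q) ^ (-(n : ℝ) / 2) := by ring
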